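/- Define g(z) = (1/z − e^{−z}/z − e^{−z})·(1/z) and h(z) = (e^{−z}/z − 1/z + 1)·e^{−z}/z for z > 0, and let E₁(z) = ∫_z^∞ e^{−t}/t dt (so that E₁(z) = −Ei(−z)). Then ∫₀^∞ ( h(z) + E₁(z)·g(z) ) dz = 4·log 2 − 2. (This integral identity yields the θ-independent value 8 log 2 − 4 of the limiting variance of the sliding-blocks log-statistic B_n^{sl}.) -/

import Mathlib

open MeasureTheory Set Real

noncomputable def gf (z : ℝ) : ℝ := (1 / z - Real.exp (-z) / z - Real.exp (-z)) * (1 / z)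
noncomputable def hf (z : ℝ) : ℝ := (Real.exp (-z) / z - 1 / z + 1) * Real.exp (-z) / z

lemma gf_eq {z : ℝ} (hz : z ≠ 0) :
    gf z = (1 - Real.exp (-z) - z * Real.exp (-z)) / z ^ 2 := by
  unfold gf; field_simp

lemma gf_nonneg {z : ℝ} (hz : 0 < z) : 0 ≤ gf z := by
  rw [gf_eq hz.ne']
  apply div_nonneg _ (by positivity)
  have h1 : z + 1 ≤ Real.exp z := Real.add_one_le_exp z
  have h2 : Real.exp (-z) * Real.exp z = 1 := by rw [← Real.exp_add]; simp
  have h4 : (0:ℝ) < Real.exp (-z) := Real.exp_pos _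
  nlinarith

lemma gf_le_one {z : ℝ} (hz : 0 < z) : gf z ≤ 1 := by
  rw [gf_eq hz.ne']
  rw [div_le_one (by positivity)]
  have h1 : -z + 1 ≤ Real.exp (-z) := Real.add_one_le_exp (-z)
  nlinarith [Real.exp_pos (-z)]

lemma gf_int_rep {z : ℝ} (hz : 0 < z) :
    gf z = ∫ s in Ioo (0:ℝ) 1, s * Real.exp (-(s * z)) := by
  rw [← MeasureTheory.integral_Ioc_eq_integral_Ioo,
    ← intervalIntegral.integral_of_le (by norm_num : (0:ℝ) ≤ 1)]
  have key : ∀ s ∈ Set.uIcc (0:ℝ) 1, HasDerivAt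
      (fun s : ℝ => -(Real.exp (-(s * z)) * (s * z + 1)) / z ^ 2)
      (s * Real.exp (-(s * z))) s := by
    intro s _
    have h1 : HasDerivAt (fun s : ℝ => -(s * z)) (-z) s := by
      exact (((hasDerivAt_id s).mul_const z).neg).congr_deriv (by ring)
    have h2 : HasDerivAt (fun s : ℝ => Real.exp (-(s * z))) (Real.exp (-(s * z)) * (-z)) s :=
      h1.exp
    have h3 : HasDerivAt (fun s : ℝ => s * z + 1) z s := by
      simpa using ((hasDerivAt_id s).mul_const z).add_const 1
    have h4 := ((h2.mul h3).neg).div_const (z ^ 2)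
    refine HasDerivAt.congr_deriv h4 (Eq.symm ?_)
    field_simp
    ring
  rw [intervalIntegral.integral_eq_sub_of_hasDerivAt key]
  · rw [gf_eq hz.ne']
    simp only [one_mul, zero_mul, neg_zero, Real.exp_zero]
    ring
  · apply Continuous.intervalIntegrable
    continuity

lemma hf_int_rep {z : ℝ} (hz : 0 < z) :
    hf z = ∫ s in Ioo (0:ℝ) 1, (1 - s) * Real.exp (-((1 + s) * z)) := by
  rw [← MeasureTheory.integral_Ioc_eq_integral_Ioo,
    ← intervalIntegral.integral_of_le (by norm_num : (0:ℝ) ≤ 1)]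
  have key : ∀ s ∈ Set.uIcc (0:ℝ) 1, HasDerivAt
      (fun s : ℝ => Real.exp (-((1 + s) * z)) * ((1 - z) / z ^ 2 + s / z))
      ((1 - s) * Real.exp (-((1 + s) * z))) s := by
    intro s _
    have h1 : HasDerivAt (fun s : ℝ => -((1 + s) * z)) (-z) s := by
      exact ((((hasDerivAt_id s).const_add 1).mul_const z).neg).congr_deriv (by ring)
    have h2 : HasDerivAt (fun s : ℝ => Real.exp (-((1 + s) * z)))
        (Real.exp (-((1 + s) * z)) * (-z)) s := h1.exp
    have h3 : HasDerivAt (fun s : ℝ => (1 - z) / z ^ 2 + s / z) (1 / z) s := by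
      simpa using (((hasDerivAt_id s).div_const z).const_add ((1 - z) / z ^ 2))
    have h4 := h2.mul h3
    refine HasDerivAt.congr_deriv h4 (Eq.symm ?_)
    field_simp
    ring
  rw [intervalIntegral.integral_eq_sub_of_hasDerivAt key]
  · unfold hf
    simp only [one_mul, zero_mul, add_zero, zero_div, neg_zero]
    rw [show -((1 + 1) * z) = -z + -z by ring, Real.exp_add]
    field_simp
    ring
  · apply Continuous.intervalIntegrable
    continuity

lemma integral_exp_neg_mul_Ioi_zero {b : ℝ} (hb : 0 < b) :
    ∫ z in Ioi (0:ℝ), Real.exp (-(b * z)) = 1 / b := by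
  have key : ∀ z ∈ Ioi (0:ℝ), HasDerivAt (fun z : ℝ => -Real.exp (-(b * z)) / b)
      (Real.exp (-(b * z))) z := by
    intro z _
    have h1 : HasDerivAt (fun z : ℝ => -(b * z)) (-b) z := by
      exact (((hasDerivAt_id z).const_mul b).neg).congr_deriv (by ring)
    have h2 := (h1.exp.neg).div_const b
    refine HasDerivAt.congr_deriv h2 (Eq.symm ?_)
    field_simp
  have hcont : ContinuousOn (fun z : ℝ => -Real.exp (-(b * z)) / b) (Ici 0) := by
    apply Continuous.continuousOn; continuity
  have hint : IntegrableOn (fun z : ℝ => Real.exp (-(b * z))) (Ioi (0:ℝ)) := by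
    simpa [neg_mul] using exp_neg_integrableOn_Ioi 0 hb
  have htend : Filter.Tendsto (fun z : ℝ => -Real.exp (-(b * z)) / b) Filter.atTop (nhds 0) := by
    have : Filter.Tendsto (fun z : ℝ => -(b * z)) Filter.atTop Filter.atBot := by
      apply Filter.tendsto_neg_atBot_iff.mpr
      exact Filter.Tendsto.const_mul_atTop hb Filter.tendsto_id
    have h2 := (Real.tendsto_exp_atBot.comp this).neg.div_const b
    simpa using h2
  have := MeasureTheory.integral_Ioi_of_hasDerivAt_of_tendsto (hcont 0 Set.self_mem_Ici) key hint htend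
  rw [this]
  rw [mul_zero, neg_zero, Real.exp_zero]
  ring

lemma integral_ratio : ∫ s in Ioo (0:ℝ) 1, (1 - s) * (1 / (1 + s)) = 2 * Real.log 2 - 1 := by
  rw [← MeasureTheory.integral_Ioc_eq_integral_Ioo,
    ← intervalIntegral.integral_of_le (by norm_num : (0:ℝ) ≤ 1)]
  have key : ∀ s ∈ Set.uIcc (0:ℝ) 1, HasDerivAt
      (fun s : ℝ => 2 * Real.log (1 + s) - s) ((1 - s) * (1 / (1 + s))) s := by
    intro s hs
    rw [Set.uIcc_of_le (by norm_num : (0:ℝ) ≤ 1)] at hs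
    have hs1 : (0:ℝ) < 1 + s := by linarith [hs.1]
    have h1 : HasDerivAt (fun s : ℝ => 1 + s) 1 s := by
      simpa using (hasDerivAt_id s).const_add 1
    have h2 : HasDerivAt (fun s : ℝ => Real.log (1 + s)) (1 / (1 + s)) s := by
      exact ((Real.hasDerivAt_log hs1.ne').comp s h1).congr_deriv (by ring)
    have h3 := (h2.const_mul 2).sub (hasDerivAt_id s)
    refine HasDerivAt.congr_deriv h3 (Eq.symm ?_)
    field_simp
    ring
  rw [intervalIntegral.integral_eq_sub_of_hasDerivAt key]
  · norm_num
  · apply ContinuousOn.intervalIntegrable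
    apply ContinuousOn.mul (by fun_prop)
    apply ContinuousOn.div continuousOn_const (by fun_prop)
    intro s hs
    rw [Set.uIcc_of_le (by norm_num : (0:ℝ) ≤ 1)] at hs
    intro h; linarith [hs.1]

local notation "μ" => volume.restrict (Ioi (0:ℝ))
local notation "ν" => volume.restrict (Ioo (0:ℝ) 1)

lemma F_integrable : Integrable (fun p : ℝ × ℝ => (1 - p.2) * Real.exp (-((1 + p.2) * p.1)))
    ((volume.restrict (Ioi (0:ℝ))).prod (volume.restrict (Ioo (0:ℝ) 1))) := by
  have hmeas : AEStronglyMeasurable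
      (fun p : ℝ × ℝ => (1 - p.2) * Real.exp (-((1 + p.2) * p.1)))
      ((volume.restrict (Ioi (0:ℝ))).prod (volume.restrict (Ioo (0:ℝ) 1))) := by
    apply Continuous.aestronglyMeasurable; continuity
  rw [integrable_prod_iff' hmeas]
  constructor
  · filter_upwards [ae_restrict_mem measurableSet_Ioo] with s hs
    have hb : (0:ℝ) < 1 + s := by linarith [hs.1]
    have := (exp_neg_integrableOn_Ioi 0 hb).const_mul (1 - s)
    apply this.congr
    filter_upwards with z using by rw [neg_mul]
  · have hnice : IntegrableOn (fun s : ℝ => (1 - s) * (1 / (1 + s))) (Ioo (0:ℝ) 1) := by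
      apply (ContinuousOn.integrableOn_Icc _).mono_set Set.Ioo_subset_Icc_self
      apply ContinuousOn.mul (by fun_prop)
      apply ContinuousOn.div continuousOn_const (by fun_prop)
      intro s hs h
      linarith [hs.1]
    apply hnice.congr
    filter_upwards [ae_restrict_mem measurableSet_Ioo] with s hs
    have hb : (0:ℝ) < 1 + s := by linarith [hs.1]
    have hnorm : ∀ z : ℝ, ‖(1 - s) * Real.exp (-((1 + s) * z))‖
        = (1 - s) * Real.exp (-((1 + s) * z)) := by
      intro z
      rw [Real.norm_eq_abs, abs_of_nonneg]
      exact mul_nonneg (by linarith [hs.2]) (Real.exp_pos _).le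
    symm
    simp only [hnorm]
    rw [MeasureTheory.integral_const_mul, integral_exp_neg_mul_Ioi_zero hb]

lemma hf_integrableOn : IntegrableOn hf (Ioi (0:ℝ)) := by
  apply (F_integrable.integral_prod_left).congr
  filter_upwards [ae_restrict_mem measurableSet_Ioi] with z hz
  exact (hf_int_rep hz).symm

lemma hf_integral : ∫ z in Ioi (0:ℝ), hf z = 2 * Real.log 2 - 1 := by
  have h1 : ∫ z in Ioi (0:ℝ), hf z
      = ∫ z in Ioi (0:ℝ), ∫ s in Ioo (0:ℝ) 1, (1 - s) * Real.exp (-((1 + s) * z)) := by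
    apply integral_congr_ae
    filter_upwards [ae_restrict_mem measurableSet_Ioi] with z hz
    exact hf_int_rep hz
  rw [h1, MeasureTheory.integral_integral_swap F_integrable]
  rw [← integral_ratio]
  apply integral_congr_ae
  filter_upwards [ae_restrict_mem measurableSet_Ioo] with s hs
  have hb : (0:ℝ) < 1 + s := by linarith [hs.1]
  rw [MeasureTheory.integral_const_mul, integral_exp_neg_mul_Ioi_zero hb]

lemma integral_sexp_Ioo {s t : ℝ} (hs : 0 < s) (ht : 0 < t) :
    ∫ z in Ioo (0:ℝ) t, s * Real.exp (-(s * z)) = 1 - Real.exp (-(s * t)) := by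
  rw [← MeasureTheory.integral_Ioc_eq_integral_Ioo,
    ← intervalIntegral.integral_of_le ht.le]
  have key : ∀ z ∈ Set.uIcc (0:ℝ) t, HasDerivAt
      (fun z : ℝ => -Real.exp (-(s * z))) (s * Real.exp (-(s * z))) z := by
    intro z _
    have h1 : HasDerivAt (fun z : ℝ => -(s * z)) (-s) z := by
      exact (((hasDerivAt_id z).const_mul s).neg).congr_deriv (by ring)
    have h2 := h1.exp.neg
    refine HasDerivAt.congr_deriv h2 (Eq.symm ?_)
    ring
  rw [intervalIntegral.integral_eq_sub_of_hasDerivAt key]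
  · simp; ring
  · apply Continuous.intervalIntegrable; continuity

lemma integral_gf_Ioo {t : ℝ} (ht : 0 < t) :
    ∫ z in Ioo (0:ℝ) t, gf z = (Real.exp (-t) - 1 + t) / t := by
  have hb : Integrable (fun p : ℝ × ℝ => p.2 * Real.exp (-(p.2 * p.1)))
      ((volume.restrict (Ioo (0:ℝ) t)).prod (volume.restrict (Ioo (0:ℝ) 1))) := by
    have hmeas : AEStronglyMeasurable (fun p : ℝ × ℝ => p.2 * Real.exp (-(p.2 * p.1)))
        ((volume.restrict (Ioo (0:ℝ) t)).prod (volume.restrict (Ioo (0:ℝ) 1))) := by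
      apply Continuous.aestronglyMeasurable; continuity
    apply Integrable.mono' (integrable_const 1) hmeas
    rw [Measure.prod_restrict]
    filter_upwards [ae_restrict_mem ((measurableSet_Ioo).prod measurableSet_Ioo)] with p hp
    obtain ⟨hp1, hp2⟩ := hp
    rw [Real.norm_eq_abs, abs_of_nonneg (mul_nonneg hp2.1.le (Real.exp_pos _).le)]
    calc p.2 * Real.exp (-(p.2 * p.1)) ≤ 1 * 1 := by
          apply mul_le_mul hp2.2.le _ (Real.exp_pos _).le one_pos.le
          rw [Real.exp_le_one_iff]
          simp only [neg_nonpos]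
          exact mul_nonneg hp2.1.le hp1.1.le
      _ = 1 := by norm_num
  have h1 : ∫ z in Ioo (0:ℝ) t, gf z
      = ∫ z in Ioo (0:ℝ) t, ∫ s in Ioo (0:ℝ) 1, s * Real.exp (-(s * z)) := by
    apply integral_congr_ae
    filter_upwards [ae_restrict_mem measurableSet_Ioo] with z hz
    exact gf_int_rep hz.1
  rw [h1, MeasureTheory.integral_integral_swap hb]
  have h2 : ∫ s in Ioo (0:ℝ) 1, (∫ z in Ioo (0:ℝ) t, s * Real.exp (-(s * z)))
      = ∫ s in Ioo (0:ℝ) 1, (1 - Real.exp (-(s * t))) := by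
    apply integral_congr_ae
    filter_upwards [ae_restrict_mem measurableSet_Ioo] with s hs
    exact integral_sexp_Ioo hs.1 ht
  rw [h2]
  -- now compute ∫ s in Ioo 0 1, (1 - exp (-(s*t)))
  rw [← MeasureTheory.integral_Ioc_eq_integral_Ioo,
    ← intervalIntegral.integral_of_le (by norm_num : (0:ℝ) ≤ 1)]
  have key : ∀ s ∈ Set.uIcc (0:ℝ) 1, HasDerivAt
      (fun s : ℝ => s + Real.exp (-(s * t)) / t) (1 - Real.exp (-(s * t))) s := by
    intro s _
    have h1 : HasDerivAt (fun s : ℝ => -(s * t)) (-t) s := by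
      exact (((hasDerivAt_id s).mul_const t).neg).congr_deriv (by ring)
    have h2 := (hasDerivAt_id s).add (h1.exp.div_const t)
    refine HasDerivAt.congr_deriv h2 (Eq.symm ?_)
    field_simp
    ring
  rw [intervalIntegral.integral_eq_sub_of_hasDerivAt key]
  · rw [zero_mul, one_mul, neg_zero, Real.exp_zero]
    field_simp
    ring
  · apply Continuous.intervalIntegrable; continuity

lemma gf_measurable : Measurable gf := by
  unfold gf
  exact (((measurable_const.div measurable_id).sub
    (measurable_id.neg.exp.div measurable_id)).sub measurable_id.neg.exp).mul
    (measurable_const.div measurable_id)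

noncomputable def Kf (p : ℝ × ℝ) : ℝ :=
  if p.1 < p.2 then Real.exp (-p.2) / p.2 * gf p.1 else 0

lemma Kf_meas : Measurable Kf := by
  apply Measurable.ite (measurableSet_lt measurable_fst measurable_snd) _ measurable_const
  exact ((measurable_snd.neg.exp.div measurable_snd)).mul (gf_measurable.comp measurable_fst)

lemma Kf_slice_eq {t : ℝ} :
    (fun z => Kf (z, t)) = (Iio t).indicator (fun z => Real.exp (-t) / t * gf z) := by
  ext z
  simp only [Kf, Set.indicator, mem_Iio]

lemma Kf_slice_int {t : ℝ} (ht : 0 < t) :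
    Integrable (fun z => Kf (z, t)) (volume.restrict (Ioi (0:ℝ))) := by
  rw [Kf_slice_eq]
  rw [integrable_indicator_iff measurableSet_Iio]
  rw [IntegrableOn, Measure.restrict_restrict measurableSet_Iio, Set.Iio_inter_Ioi]
  apply Integrable.mono' (g := fun _ => |Real.exp (-t) / t|)
  · exact integrableOn_const measure_Ioo_lt_top.ne
  · exact (((measurable_const.neg.exp.div measurable_const)).mul
      gf_measurable).aestronglyMeasurable
  · filter_upwards [ae_restrict_mem measurableSet_Ioo] with z hz
    rw [Real.norm_eq_abs, abs_mul]
    calc |Real.exp (-t) / t| * |gf z| ≤ |Real.exp (-t) / t| * 1 := by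
          apply mul_le_mul_of_nonneg_left _ (abs_nonneg _)
          rw [abs_of_nonneg (gf_nonneg hz.1)]
          exact gf_le_one hz.1
      _ = |Real.exp (-t) / t| := by ring

lemma Kf_int_z {t : ℝ} (ht : 0 < t) :
    ∫ z, Kf (z, t) ∂(volume.restrict (Ioi (0:ℝ))) = hf t := by
  rw [Kf_slice_eq, integral_indicator measurableSet_Iio,
    Measure.restrict_restrict measurableSet_Iio, Set.Iio_inter_Ioi,
    MeasureTheory.integral_const_mul, integral_gf_Ioo ht]
  unfold hf
  field_simp

lemma Kf_nonneg {z t : ℝ} (hz : 0 < z) (ht : 0 < t) : 0 ≤ Kf (z, t) := by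
  unfold Kf
  split
  · exact mul_nonneg (div_nonneg (Real.exp_pos _).le ht.le) (gf_nonneg hz)
  · exact le_refl 0

lemma Kf_int_z_norm {t : ℝ} (ht : 0 < t) :
    ∫ z, ‖Kf (z, t)‖ ∂(volume.restrict (Ioi (0:ℝ))) = hf t := by
  rw [← Kf_int_z ht]
  apply integral_congr_ae
  filter_upwards [ae_restrict_mem measurableSet_Ioi] with z hz
  rw [Real.norm_eq_abs, abs_of_nonneg (Kf_nonneg hz ht)]

lemma Kf_integrable : Integrable Kf
    ((volume.restrict (Ioi (0:ℝ))).prod (volume.restrict (Ioi (0:ℝ)))) := by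
  rw [integrable_prod_iff' Kf_meas.aestronglyMeasurable]
  constructor
  · filter_upwards [ae_restrict_mem measurableSet_Ioi] with t ht
    exact Kf_slice_int ht
  · apply hf_integrableOn.congr
    filter_upwards [ae_restrict_mem measurableSet_Ioi] with t ht
    exact (Kf_int_z_norm ht).symm

lemma E1g_integrable : Integrable
    (fun z => (∫ t in Ioi z, Real.exp (-t) / t) * gf z) (volume.restrict (Ioi (0:ℝ))) := by
  apply (Kf_integrable.integral_prod_left).congr
  filter_upwards [ae_restrict_mem measurableSet_Ioi] with z hz
  have : (fun t => Kf (z, t)) = (Ioi z).indicator (fun t => Real.exp (-t) / t * gf z) := by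
    ext t
    simp only [Kf, Set.indicator, mem_Ioi]
  rw [this, integral_indicator measurableSet_Ioi,
    Measure.restrict_restrict measurableSet_Ioi,
    Set.inter_eq_left.mpr (Set.Ioi_subset_Ioi hz.le),
    MeasureTheory.integral_mul_const]

lemma E1g_integral :
    ∫ z in Ioi (0:ℝ), (∫ t in Ioi z, Real.exp (-t) / t) * gf z = 2 * Real.log 2 - 1 := by
  have h1 : ∫ z in Ioi (0:ℝ), (∫ t in Ioi z, Real.exp (-t) / t) * gf z
      = ∫ z, (∫ t, Kf (z, t) ∂(volume.restrict (Ioi (0:ℝ)))) ∂(volume.restrict (Ioi (0:ℝ))) := by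
    apply integral_congr_ae
    filter_upwards [ae_restrict_mem measurableSet_Ioi] with z hz
    have : (fun t => Kf (z, t)) = (Ioi z).indicator (fun t => Real.exp (-t) / t * gf z) := by
      ext t
      simp only [Kf, Set.indicator, mem_Ioi]
    rw [this, integral_indicator measurableSet_Ioi,
      Measure.restrict_restrict measurableSet_Ioi,
      Set.inter_eq_left.mpr (Set.Ioi_subset_Ioi hz.le),
      MeasureTheory.integral_mul_const]
  rw [h1, MeasureTheory.integral_integral_swap (f := fun z t => Kf (z,t)) Kf_integrable]
  rw [← hf_integral]
  apply integral_congr_ae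
  filter_upwards [ae_restrict_mem measurableSet_Ioi] with t ht
  exact Kf_int_z ht

theorem integral_h_add_E1_mul_g :
    ∫ z in Set.Ioi (0 : ℝ),
        ((Real.exp (-z) / z - 1 / z + 1) * Real.exp (-z) / z +
          (∫ t in Set.Ioi z, Real.exp (-t) / t) *
            ((1 / z - Real.exp (-z) / z - Real.exp (-z)) * (1 / z))) =
      4 * Real.log 2 - 2 := by
  have : ∫ z in Set.Ioi (0 : ℝ),
      (hf z + (∫ t in Set.Ioi z, Real.exp (-t) / t) * gf z)
      = 4 * Real.log 2 - 2 := by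
    rw [MeasureTheory.integral_add hf_integrableOn E1g_integrable, hf_integral, E1g_integral]
    ring
  exact this
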